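/- Let a > 0, b ≥ 0, c ∈ ℝ, d > 0. Suppose y : (0, ∞) → ℝ is a twice continuously differentiable solution of x² y''(x) + (c x + d) y'(x) − (a x + b) y(x) = 0, and suppose there exists x₂ > 0 with y(x₂) > 0 and y'(x₂) > 0. Then y is positive and strictly increasing on [x₂, ∞). -/

import Mathlib

open Set Filter Topology

theorem stmt_7 (a b c d : ℝ) (ha : 0 < a) (hb : 0 ≤ b) (hd : 0 < d)
    (y y' y'' : ℝ → ℝ)
    (hy : ∀ x ∈ Ioi (0:ℝ), HasDerivAt y (y' x) x)
    (hy' : ∀ x ∈ Ioi (0:ℝ), HasDerivAt y' (y'' x) x)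
    (hy''cont : ContinuousOn y'' (Ioi (0:ℝ)))
    (hode : ∀ x ∈ Ioi (0:ℝ),
      x ^ 2 * y'' x + (c * x + d) * y' x - (a * x + b) * y x = 0)
    (x₂ : ℝ) (hx₂ : 0 < x₂) (hpos : 0 < y x₂) (hneg : 0 < y' x₂) :
    (∀ x ∈ Ici x₂, 0 < y x) ∧ StrictMonoOn y (Ici x₂) := by
  have hyc : ∀ x : ℝ, 0 < x → ContinuousAt y x := fun x hx => (hy x hx).continuousAt
  have hy'c : ∀ x : ℝ, 0 < x → ContinuousAt y' x := fun x hx => (hy' x hx).continuousAt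
  -- Key: y' > 0 on Ici x₂
  have key : ∀ x ∈ Ici x₂, 0 < y' x := by
    by_contra h
    push_neg at h
    obtain ⟨x₀, hx₀, hx₀'⟩ := h
    set T : Set ℝ := {x | x₂ ≤ x ∧ y' x ≤ 0} with hTdef
    have hTne : T.Nonempty := ⟨x₀, hx₀, hx₀'⟩
    have hTbd : BddBelow T := ⟨x₂, fun u hu => hu.1⟩
    set t := sInf T with ht
    have htx₂ : x₂ ≤ t := le_csInf hTne fun u hu => hu.1
    have htpos : 0 < t := lt_of_lt_of_le hx₂ htx₂
    have hy't_cont : ContinuousAt y' t := hy'c t htpos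
    -- y' t ≤ 0
    have h1 : y' t ≤ 0 := by
      by_contra hgt
      push_neg at hgt
      have hev : ∀ᶠ s in 𝓝 t, 0 < y' s := hy't_cont.eventually (eventually_gt_nhds hgt)
      obtain ⟨ε, hε, hball⟩ := Metric.eventually_nhds_iff.mp hev
      obtain ⟨u, huT, hu⟩ := exists_lt_of_csInf_lt hTne (show sInf T < t + ε by linarith)
      have htu : t ≤ u := csInf_le hTbd huT
      have : 0 < y' u := hball (by rw [Real.dist_eq, abs_lt]; constructor <;> linarith)
      exact absurd huT.2 (not_le.mpr this)
    -- y' > 0 on [x₂, t)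
    have h2 : ∀ s, x₂ ≤ s → s < t → 0 < y' s := by
      intro s hs1 hs2
      by_contra hs3
      push_neg at hs3
      exact absurd (csInf_le hTbd ⟨hs1, hs3⟩) (not_le.mpr hs2)
    have htgt : x₂ < t := by
      rcases lt_or_eq_of_le htx₂ with hlt | heq
      · exact hlt
      · rw [← heq] at h1; linarith
    -- y' t ≥ 0 by left continuity
    have h3 : 0 ≤ y' t := by
      have htend : Tendsto y' (𝓝[<] t) (𝓝 (y' t)) :=
        (hy't_cont.continuousWithinAt : ContinuousWithinAt y' (Iio t) t).tendsto
      refine ge_of_tendsto htend ?_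
      filter_upwards [Ioo_mem_nhdsLT htgt] with s hs
      exact (h2 s hs.1.le hs.2).le
    have h4 : y' t = 0 := le_antisymm h1 h3
    -- y strictly increasing on [x₂, t]
    have hmono : StrictMonoOn y (Icc x₂ t) := by
      apply strictMonoOn_of_deriv_pos (convex_Icc _ _)
      · intro s hs
        exact (hyc s (lt_of_lt_of_le hx₂ hs.1)).continuousWithinAt
      · intro s hs
        rw [interior_Icc] at hs
        rw [(hy s (lt_trans hx₂ hs.1)).deriv]
        exact h2 s hs.1.le hs.2
    have hyt : 0 < y t :=
      lt_trans hpos (hmono ⟨le_refl _, htx₂⟩ ⟨htx₂, le_refl _⟩ htgt)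
    -- ODE at t gives y'' t > 0
    have hode_t := hode t htpos
    rw [h4] at hode_t
    have h6 : 0 < t ^ 2 * y'' t := by nlinarith [mul_pos (mul_pos ha htpos) hyt, mul_nonneg hb hyt.le]
    have h5 : 0 < y'' t := by nlinarith [sq_nonneg t, mul_pos htpos htpos]
    -- slope argument: y' < 0 just left of t, contradiction
    have hslope : Tendsto (slope y' t) (𝓝[<] t) (𝓝 (y'' t)) := by
      refine (hasDerivAt_iff_tendsto_slope.mp (hy' t htpos)).mono_left
        (nhdsWithin_mono t fun s hs => ?_)
      exact ne_of_lt hs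
    have hev1 : ∀ᶠ s in 𝓝[<] t, 0 < slope y' t s := hslope.eventually (eventually_gt_nhds h5)
    have hev2 : ∀ᶠ s in 𝓝[<] t, s ∈ Ioo x₂ t :=
      eventually_of_mem (Ioo_mem_nhdsLT htgt) fun s hs => hs
    obtain ⟨s, hs1, hs2⟩ := (hev1.and hev2).exists
    have hneg' : y' s < 0 := by
      rw [slope_def_field, h4, sub_zero] at hs1
      rcases div_pos_iff.mp hs1 with ⟨_, h⟩ | ⟨h, _⟩
      · linarith [hs2.2, sub_pos.mp h]
      · exact h
    exact absurd (h2 s hs2.1.le hs2.2) (not_lt.mpr hneg'.le)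
  -- strict monotonicity on Ici x₂
  have hmono : StrictMonoOn y (Ici x₂) := by
    apply strictMonoOn_of_deriv_pos (convex_Ici _)
    · intro s hs
      exact (hyc s (lt_of_lt_of_le hx₂ hs)).continuousWithinAt
    · intro s hs
      rw [interior_Ici] at hs
      rw [(hy s (lt_trans hx₂ hs)).deriv]
      exact key s (mem_Ici.mpr (le_of_lt hs))
  refine ⟨fun x hx => ?_, hmono⟩
  rcases eq_or_lt_of_le (mem_Ici.mp hx) with rfl | hlt
  · exact hpos
  · exact lt_trans hpos (hmono (self_mem_Ici) hx hlt)
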